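/- Assume 0 < 1/n ≪ δ ≪ 1 and 0 ≤ γ ≤ 3δ. Let 𝒞 be a set of colors with |𝒞| = n, let 𝒟 = {D_i : i ∈ 𝒞} be digraphs on a common vertex set V of size n with δ⁰(𝒟) ≥ ⌈n/2⌉, let A ∪ B be a partition of V with |A| = ⌈n/2⌉ + γn, and let 𝒞' ⊆ 𝒞 with |𝒞 \ 𝒞'| ≤ δn be such that D_i[B] has no edges for all i ∈ 𝒞'. Define Y_1 := {v ∈ A : |N⁺_{D_i}(v) ∩ B| ≤ (1 − δ^{1/4})|B| for at least δ^{1/4}|𝒞'| colors i ∈ 𝒞'}. Then |Y_1| ≤ γn/√δ. -/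

import Mathlib

open Finset
open scoped Classical

/-- Out-degree of a vertex in a digraph given as a relation on `Fin n`. -/
noncomputable def outDeg {n : ℕ} (D : Fin n → Fin n → Prop) (v : Fin n) : ℕ :=
  Nat.card {w : Fin n // D v w}

/-- In-degree of a vertex in a digraph given as a relation on `Fin n`. -/
noncomputable def inDeg {n : ℕ} (D : Fin n → Fin n → Prop) (v : Fin n) : ℕ :=
  Nat.card {w : Fin n // D w v}

/-- Number of out-neighbours of `v` inside the set `S` in the digraph `D`. -/
noncomputable def outDegIn {n : ℕ} (D : Fin n → Fin n → Prop) (v : Fin n)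
    (S : Finset (Fin n)) : ℕ :=
  Nat.card {w : Fin n // w ∈ S ∧ D v w}

lemma outDegIn_eq {n : ℕ} (D : Fin n → Fin n → Prop) (v : Fin n) (S : Finset (Fin n)) :
    outDegIn D v S = (S.filter (fun w => D v w)).card := by
  rw [outDegIn, Nat.card_eq_fintype_card, Fintype.card_subtype]
  congr 1
  ext w
  simp [and_comm]

lemma inDeg_eq {n : ℕ} (D : Fin n → Fin n → Prop) (v : Fin n) :
    inDeg D v = (univ.filter (fun w => D w v)).card := by
  rw [inDeg, Nat.card_eq_fintype_card, Fintype.card_subtype]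

/-- **Bound on the exceptional set `Y₁`.**  In the setting of the extremal-case lemma
(`0 < 1/n ≪ δ ≪ 1`, `0 ≤ γ ≤ 3δ`, loopless digraphs with minimum semi-degree
`≥ ⌈n/2⌉`, `|A| = ⌈n/2⌉ + γn`, `|𝒞 \ 𝒞'| ≤ δn`, and `D i[B]` empty for all `i ∈ 𝒞'`
where `B = Aᶜ`), the set
`Y₁ = {v ∈ A : d⁺_{D i}(v, B) ≤ (1 − δ^{1/4})|B| for at least δ^{1/4}|𝒞'| colours i ∈ 𝒞'}`
has size at most `γn/√δ`. -/
theorem Y1_bound :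
    ∃ δ0 : ℝ, 0 < δ0 ∧ ∀ δ : ℝ, 0 < δ → δ ≤ δ0 →
    ∃ n0 : ℕ, ∀ n : ℕ, n0 ≤ n →
    ∀ γ : ℝ, 0 ≤ γ → γ ≤ 3 * δ →
    ∀ D : Fin n → Fin n → Fin n → Prop,
    (∀ i v, ¬ D i v v) →
    (∀ i v, (n + 1) / 2 ≤ outDeg (D i) v ∧ (n + 1) / 2 ≤ inDeg (D i) v) →
    ∀ A : Finset (Fin n), (A.card : ℝ) = (((n + 1) / 2 : ℕ) : ℝ) + γ * n →
    ∀ C' : Finset (Fin n), ((C'ᶜ.card : ℝ) ≤ δ * n) →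
    (∀ i ∈ C', ∀ u ∈ Aᶜ, ∀ v ∈ Aᶜ, ¬ D i u v) →
    (((A.filter (fun v : Fin n =>
        δ ^ ((1 : ℝ) / 4) * (C'.card : ℝ) ≤
          ((C'.filter (fun i : Fin n =>
            (outDegIn (D i) v Aᶜ : ℝ) ≤ (1 - δ ^ ((1 : ℝ) / 4)) * (Aᶜ.card : ℝ))).card
            : ℝ))).card : ℝ)
      ≤ γ * n / Real.sqrt δ) := by
  refine ⟨1/100, by norm_num, fun δ hδ0 hδ1 => ⟨10, fun n hn γ hγ0 hγ3 D hloop hdeg A hA C' hC' hB => ?_⟩⟩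
  have hn10 : (10 : ℝ) ≤ n := by exact_mod_cast hn
  have hq : (δ : ℝ) ^ ((1:ℝ)/4) ≥ 0 := Real.rpow_nonneg hδ0.le _
  have hsqrt : Real.sqrt δ = δ ^ ((1:ℝ)/4) * δ ^ ((1:ℝ)/4) := by
    rw [← Real.rpow_add hδ0, Real.sqrt_eq_rpow]
    norm_num
  have hsqrtpos : 0 < Real.sqrt δ := Real.sqrt_pos.mpr hδ0
  -- half bound
  have hhalf : ((((n:ℕ) + 1) / 2 : ℕ) : ℝ) ≤ ((n:ℝ) + 1) / 2 := by
    have := Nat.cast_div_le (α := ℝ) (m := n + 1) (n := 2)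
    simpa using this
  -- cardinal of B
  have hAle : A.card ≤ n := by simpa using A.card_le_univ
  have hcardB : ((Aᶜ.card : ℕ) : ℝ) = (n : ℝ) - A.card := by
    rw [Finset.card_compl]
    simp only [Fintype.card_fin]
    rw [Nat.cast_sub hAle]
  have hBpos : (0 : ℝ) < (Aᶜ.card : ℝ) := by
    rw [hcardB, hA]
    nlinarith
  have hC'card : (n : ℝ) - δ * n ≤ (C'.card : ℝ) := by
    have h1 : C'.card = n - C'ᶜ.card := by
      rw [Finset.card_compl]
      have := C'.card_le_univ
      simp at this ⊢
      omega
    have h2 : C'ᶜ.card ≤ n := by simpa using C'ᶜ.card_le_univ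
    rw [h1, Nat.cast_sub h2]
    linarith
  have hC'pos : (0 : ℝ) < (C'.card : ℝ) := by nlinarith
  set B := Aᶜ with hBdef
  -- per-colour double counting
  have key : ∀ i ∈ C',
      ∑ v ∈ A, ((B.card : ℝ) - (outDegIn (D i) v B : ℝ)) ≤ (B.card : ℝ) * (γ * n) := by
    intro i hi
    have hswap : ∑ v ∈ A, (outDegIn (D i) v B : ℕ) =
        ∑ b ∈ B, (A.filter (fun a => D i a b)).card := by
      simp only [outDegIn_eq, Finset.card_filter]
      rw [Finset.sum_comm]
    have hb : ∀ b ∈ B, (n + 1) / 2 ≤ (A.filter (fun a => D i a b)).card := by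
      intro b hb
      have hdb := (hdeg i b).2
      rw [inDeg_eq] at hdb
      have heq : (univ.filter (fun w => D i w b)) = (A.filter (fun w => D i w b)) := by
        ext w
        simp only [mem_filter, mem_univ, true_and]
        constructor
        · intro hw
          refine ⟨?_, hw⟩
          by_contra hwA
          exact hB i hi w (Finset.mem_compl.mpr hwA) b hb hw
        · tauto
      rw [heq] at hdb
      exact hdb
    have hsum_ge : (B.card : ℝ) * (((n+1)/2 : ℕ) : ℝ) ≤ ∑ v ∈ A, (outDegIn (D i) v B : ℝ) := by
      have : B.card * ((n+1)/2) ≤ ∑ v ∈ A, (outDegIn (D i) v B : ℕ) := by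
        rw [hswap]
        calc B.card * ((n+1)/2) = ∑ _b ∈ B, ((n+1)/2) := by rw [Finset.sum_const, smul_eq_mul]
        _ ≤ ∑ b ∈ B, (A.filter (fun a => D i a b)).card := Finset.sum_le_sum hb
      exact_mod_cast this
    rw [Finset.sum_sub_distrib, Finset.sum_const, nsmul_eq_mul, hA]
    nlinarith [hsum_ge]
  -- total bound
  have total : ∑ i ∈ C', ∑ v ∈ A, ((B.card : ℝ) - (outDegIn (D i) v B : ℝ))
      ≤ (C'.card : ℝ) * ((B.card : ℝ) * (γ * n)) := by
    calc ∑ i ∈ C', ∑ v ∈ A, ((B.card : ℝ) - (outDegIn (D i) v B : ℝ))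
        ≤ ∑ _i ∈ C', (B.card : ℝ) * (γ * n) := Finset.sum_le_sum key
      _ = (C'.card : ℝ) * ((B.card : ℝ) * (γ * n)) := by
          rw [Finset.sum_const, nsmul_eq_mul]
  have hf_nonneg : ∀ i, ∀ v, (0:ℝ) ≤ (B.card : ℝ) - (outDegIn (D i) v B : ℝ) := by
    intro i v
    rw [outDegIn_eq]
    have := Finset.card_filter_le B (fun w => D i v w)
    have : ((B.filter (fun w => D i v w)).card : ℝ) ≤ B.card := by exact_mod_cast this
    linarith
  set Y := A.filter (fun v : Fin n =>
      δ ^ ((1 : ℝ) / 4) * (C'.card : ℝ) ≤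
        ((C'.filter (fun i : Fin n =>
          (outDegIn (D i) v B : ℝ) ≤ (1 - δ ^ ((1 : ℝ) / 4)) * (B.card : ℝ))).card : ℝ)) with hY
  -- lower bound for v ∈ Y
  have hv_lb : ∀ v ∈ Y, Real.sqrt δ * (C'.card : ℝ) * (B.card : ℝ) ≤
      ∑ i ∈ C', ((B.card : ℝ) - (outDegIn (D i) v B : ℝ)) := by
    intro v hv
    rw [hY, Finset.mem_filter] at hv
    obtain ⟨-, hv2⟩ := hv
    set S := C'.filter (fun i : Fin n =>
        (outDegIn (D i) v B : ℝ) ≤ (1 - δ ^ ((1 : ℝ) / 4)) * (B.card : ℝ)) with hS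
    have hSsub : S ⊆ C' := Finset.filter_subset _ _
    have step1 : ∑ i ∈ S, ((B.card : ℝ) - (outDegIn (D i) v B : ℝ)) ≤
        ∑ i ∈ C', ((B.card : ℝ) - (outDegIn (D i) v B : ℝ)) :=
      Finset.sum_le_sum_of_subset_of_nonneg hSsub (fun i _ _ => hf_nonneg i v)
    have step2 : (S.card : ℝ) * (δ ^ ((1:ℝ)/4) * (B.card : ℝ)) ≤
        ∑ i ∈ S, ((B.card : ℝ) - (outDegIn (D i) v B : ℝ)) := by
      have h := Finset.card_nsmul_le_sum S
        (fun i => ((B.card : ℝ) - (outDegIn (D i) v B : ℝ)))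
        (δ ^ ((1:ℝ)/4) * (B.card : ℝ)) ?_
      · rw [nsmul_eq_mul] at h
        exact h
      · intro i hiS
        rw [hS, Finset.mem_filter] at hiS
        nlinarith [hiS.2]
    calc Real.sqrt δ * (C'.card : ℝ) * (B.card : ℝ)
        = (δ ^ ((1:ℝ)/4) * (C'.card : ℝ)) * (δ ^ ((1:ℝ)/4) * (B.card : ℝ)) := by
          rw [hsqrt]; ring
      _ ≤ (S.card : ℝ) * (δ ^ ((1:ℝ)/4) * (B.card : ℝ)) :=
          mul_le_mul_of_nonneg_right hv2 (mul_nonneg hq hBpos.le)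
      _ ≤ ∑ i ∈ S, ((B.card : ℝ) - (outDegIn (D i) v B : ℝ)) := step2
      _ ≤ ∑ i ∈ C', ((B.card : ℝ) - (outDegIn (D i) v B : ℝ)) := step1
  -- combine
  have hYsum : (Y.card : ℝ) * (Real.sqrt δ * (C'.card : ℝ) * (B.card : ℝ)) ≤
      ∑ v ∈ Y, ∑ i ∈ C', ((B.card : ℝ) - (outDegIn (D i) v B : ℝ)) := by
    have h := Finset.card_nsmul_le_sum Y
      (fun v => ∑ i ∈ C', ((B.card : ℝ) - (outDegIn (D i) v B : ℝ)))
      (Real.sqrt δ * (C'.card : ℝ) * (B.card : ℝ)) hv_lb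
    rw [nsmul_eq_mul] at h
    exact h
  have hmono : ∑ v ∈ Y, ∑ i ∈ C', ((B.card : ℝ) - (outDegIn (D i) v B : ℝ)) ≤
      ∑ v ∈ A, ∑ i ∈ C', ((B.card : ℝ) - (outDegIn (D i) v B : ℝ)) :=
    Finset.sum_le_sum_of_subset_of_nonneg (Finset.filter_subset _ _)
      (fun v _ _ => Finset.sum_nonneg fun i _ => hf_nonneg i v)
  have hcomm : ∑ v ∈ A, ∑ i ∈ C', ((B.card : ℝ) - (outDegIn (D i) v B : ℝ)) =
      ∑ i ∈ C', ∑ v ∈ A, ((B.card : ℝ) - (outDegIn (D i) v B : ℝ)) := Finset.sum_comm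
  have hP : (0 : ℝ) < (C'.card : ℝ) * (B.card : ℝ) := mul_pos hC'pos hBpos
  have hfin : (Y.card : ℝ) * Real.sqrt δ * ((C'.card : ℝ) * (B.card : ℝ)) ≤
      (γ * n) * ((C'.card : ℝ) * (B.card : ℝ)) := by
    calc (Y.card : ℝ) * Real.sqrt δ * ((C'.card : ℝ) * (B.card : ℝ))
        = (Y.card : ℝ) * (Real.sqrt δ * (C'.card : ℝ) * (B.card : ℝ)) := by ring
      _ ≤ ∑ v ∈ Y, ∑ i ∈ C', ((B.card : ℝ) - (outDegIn (D i) v B : ℝ)) := hYsum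
      _ ≤ ∑ v ∈ A, ∑ i ∈ C', ((B.card : ℝ) - (outDegIn (D i) v B : ℝ)) := hmono
      _ = ∑ i ∈ C', ∑ v ∈ A, ((B.card : ℝ) - (outDegIn (D i) v B : ℝ)) := hcomm
      _ ≤ (C'.card : ℝ) * ((B.card : ℝ) * (γ * n)) := total
      _ = (γ * n) * ((C'.card : ℝ) * (B.card : ℝ)) := by ring
  have hfin2 : (Y.card : ℝ) * Real.sqrt δ ≤ γ * n := le_of_mul_le_mul_right hfin hP
  rw [le_div_iff₀ hsqrtpos]
  exact hfin2
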